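/- For every k ∈ ℕ, the cost function f_k over the unary alphabet {1} defined by f_k(x) = ((x mod k) + 1) · x (where x is the input length) is computable by a CRA over (ℕ, +c) with k registers, but not computable by any CRA over (ℕ, +c) with fewer than k registers. -/

import Mathlib

/-- A cost register automaton (CRA) over the increment grammar `G(⊗c)`:
a deterministic finite-state machine with finitely many write-only registers;
at each step every register is updated either to `y ⊗ c` (a register combined
with a constant) or to a constant `c`.  The output at a state, when defined, is
such an expression over the final register values. -/
structure IncCRA (σ D : Type*) where
  Q : Type*
  finQ : Fintype Q
  q0 : Q
  X : Type*
  finX : Fintype X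
  δ : Q → σ → Q
  /-- `ρ q a x = .inl (y, c)` means `x := y ⊗ c`; `ρ q a x = .inr c` means `x := c`. -/
  ρ : Q → σ → X → (X × D) ⊕ D
  μ : Q → Option ((X × D) ⊕ D)

namespace IncCRA

variable {σ D : Type*}

/-- Value of an update expression under a register valuation, for the
interpretation `op` of `⊗`. -/
def evalE (M : IncCRA σ D) (op : D → D → D) (ν : M.X → D) : (M.X × D) ⊕ D → D
  | .inl (y, c) => op (ν y) c
  | .inr c => c

/-- One step of the machine on input symbol `a`. -/
def step (M : IncCRA σ D) (op : D → D → D) (cfg : M.Q × (M.X → D)) (a : σ) :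
    M.Q × (M.X → D) :=
  (M.δ cfg.1 a, fun x => M.evalE op cfg.2 (M.ρ cfg.1 a x))

/-- The configuration reached on input word `w`, starting with all registers
holding the initial value `init`. -/
def run (M : IncCRA σ D) (op : D → D → D) (init : D) (w : List σ) : M.Q × (M.X → D) :=
  w.foldl (M.step op) (M.q0, fun _ => init)

/-- The (partial) output of the machine on input word `w`. -/
def output (M : IncCRA σ D) (op : D → D → D) (init : D) (w : List σ) : Option D :=
  (M.μ (M.run op init w).1).map (M.evalE op (M.run op init w).2)

end IncCRA

namespace IncCRAAux
open IncCRA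

/-! ### Upper bound: the `k`-register machine -/

universe uQ uX

def Mk (k : ℕ) [NeZero k] : IncCRA Unit ℕ where
  Q := ULift.{uQ} (ZMod k)
  finQ := inferInstance
  q0 := ⟨0⟩
  X := ULift.{uX} (ZMod k)
  finX := inferInstance
  δ q _ := ⟨q.down + 1⟩
  ρ _ _ x := Sum.inl (x, x.down.val + 1)
  μ q := some (Sum.inl (⟨q.down⟩, 0))

lemma Mk_foldl (k : ℕ) [NeZero k] (w : List Unit) :
    ∀ (q : ULift.{uQ} (ZMod k)) (ν : ULift.{uX} (ZMod k) → ℕ),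
    List.foldl ((Mk k).step (· + ·)) (q, ν) w
      = ((⟨q.down + (w.length : ZMod k)⟩ : ULift (ZMod k)),
         fun r => ν r + (r.down.val + 1) * w.length) := by
  induction w with
  | nil => intro q ν; simp; rfl
  | cons a w ih =>
      intro q ν
      simp only [List.foldl_cons]
      erw [ih]
      refine Prod.ext ?_ ?_
      · show (⟨(q.down + 1) + (w.length : ZMod k)⟩ : ULift (ZMod k))
            = ⟨q.down + ((w.length + 1 : ℕ) : ZMod k)⟩
        congr 1
        push_cast; ring
      · funext r
        show ((Mk k).evalE (· + ·) ν ((Mk k).ρ q () r)) + (r.down.val + 1) * w.length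
              = ν r + (r.down.val + 1) * ((a :: w).length)
        simp only [Mk, IncCRA.evalE, List.length_cons]
        ring

lemma Mk_output (k : ℕ) [NeZero k] (w : List Unit) :
    (Mk.{uQ, uX} k).output (· + ·) 0 w = some ((w.length % k + 1) * w.length) := by
  have h : (Mk k).run (· + ·) 0 w
      = ((⟨(0 : ZMod k) + (w.length : ZMod k)⟩ : ULift.{uQ} (ZMod k)),
         fun r : ULift.{uX} (ZMod k) => 0 + (r.down.val + 1) * w.length) :=
    Mk_foldl k w ⟨0⟩ (fun _ => 0)
  have hv : ((0 : ZMod k) + (w.length : ZMod k)).val = w.length % k := by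
    rw [zero_add, ZMod.val_natCast]
  unfold IncCRA.output
  rw [h]
  show Option.map _ (some (Sum.inl ((⟨(0 : ZMod k) + (w.length : ZMod k)⟩ : ULift (ZMod k)), 0))) = _
  show some ((0 + (((0 : ZMod k) + (w.length : ZMod k)).val + 1) * w.length) + 0) = _
  rw [hv]; ring

/-! ### Lower bound -/

variable (M : IncCRA Unit ℕ)

/-- Bound on all constants appearing in the machine. -/
def Cmax : ℕ :=
  letI := M.finQ; letI := M.finX
  (Finset.univ.sup fun p : M.Q × M.X => Sum.elim Prod.snd id (M.ρ p.1 () p.2)) ⊔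
  (Finset.univ.sup fun q : M.Q => (M.μ q).elim 0 (Sum.elim Prod.snd id))

lemma ρ_const_le (q : M.Q) (x : M.X) : Sum.elim Prod.snd id (M.ρ q () x) ≤ Cmax M := by
  letI := M.finQ; letI := M.finX
  exact le_trans (Finset.le_sup (f := fun p : M.Q × M.X => Sum.elim Prod.snd id (M.ρ p.1 () p.2))
    (Finset.mem_univ (q, x))) le_sup_left

lemma μ_const_le (q : M.Q) : (M.μ q).elim 0 (Sum.elim Prod.snd id) ≤ Cmax M := by
  letI := M.finQ; letI := M.finX
  exact le_trans (Finset.le_sup (f := fun q : M.Q => (M.μ q).elim 0 (Sum.elim Prod.snd id))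
    (Finset.mem_univ q)) le_sup_right

/-- The output produced `i` steps after reaching configuration `cfg`. -/
def outp (i : ℕ) (cfg : M.Q × (M.X → ℕ)) : Option ℕ :=
  (M.μ ((fun c => M.step (· + ·) c ())^[i] cfg).1).map
    (M.evalE (· + ·) ((fun c => M.step (· + ·) c ())^[i] cfg).2)

lemma outp_succ (i : ℕ) (q : M.Q) (ν : M.X → ℕ) :
    outp M (i + 1) (q, ν)
      = outp M i (M.δ q (), fun x => M.evalE (· + ·) ν (M.ρ q () x)) := by
  unfold outp
  rw [Function.iterate_succ_apply]
  rfl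

/-- Structure lemma: the output `i` steps in the future from state `q` is, as a
function of the current register values, either undefined, a constant `≤ (i+1)·Cmax`,
or a single register plus a constant `≤ (i+1)·Cmax`. -/
lemma structure_lemma : ∀ (i : ℕ) (q : M.Q),
    (∀ ν : M.X → ℕ, outp M i (q, ν) = none) ∨
    ∃ c ≤ (i + 1) * Cmax M,
      ((∀ ν : M.X → ℕ, outp M i (q, ν) = some c) ∨
       ∃ x : M.X, ∀ ν : M.X → ℕ, outp M i (q, ν) = some (ν x + c)) := by
  intro i
  induction i with
  | zero =>
      intro q
      rcases h : M.μ q with _ | (⟨y, c⟩ | c)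
      · left; intro ν; simp [outp, h]
      · right
        refine ⟨c, ?_, Or.inr ⟨y, fun ν => ?_⟩⟩
        · have := μ_const_le M q; rw [h] at this; simpa using this
        · simp [outp, h, IncCRA.evalE]
      · right
        refine ⟨c, ?_, Or.inl fun ν => ?_⟩
        · have := μ_const_le M q; rw [h] at this; simpa using this
        · simp [outp, h, IncCRA.evalE]
  | succ i ih =>
      intro q
      rcases ih (M.δ q ()) with hnone | ⟨c, hc, hconst | ⟨x, hx⟩⟩
      · left; intro ν; rw [outp_succ]; exact hnone _
      · right
        exact ⟨c, le_trans hc (Nat.mul_le_mul_right _ (by omega)),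
          Or.inl fun ν => by rw [outp_succ]; exact hconst _⟩
      · rcases hρ : M.ρ q () x with ⟨y, d⟩ | d
        · right
          refine ⟨d + c, ?_, Or.inr ⟨y, fun ν => ?_⟩⟩
          · have hd := ρ_const_le M q x; rw [hρ] at hd; simp at hd
            have : (i + 1 + 1) * Cmax M = Cmax M + (i + 1) * Cmax M := by ring
            omega
          · rw [outp_succ, hx]
            simp [IncCRA.evalE, hρ, add_assoc]
        · right
          refine ⟨d + c, ?_, Or.inl fun ν => ?_⟩
          · have hd := ρ_const_le M q x; rw [hρ] at hd; simp at hd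
            have : (i + 1 + 1) * Cmax M = Cmax M + (i + 1) * Cmax M := by ring
            omega
          · rw [outp_succ, hx]
            simp [IncCRA.evalE, hρ]

lemma foldl_replicate (i : ℕ) : ∀ cfg : M.Q × (M.X → ℕ),
    List.foldl (M.step (· + ·)) cfg (List.replicate i ())
      = (fun c => M.step (· + ·) c ())^[i] cfg := by
  induction i with
  | zero => intro cfg; simp
  | succ i ih =>
      intro cfg
      rw [List.replicate_succ, List.foldl_cons, ih, Function.iterate_succ_apply]

lemma output_eq_outp (n i : ℕ) :
    M.output (· + ·) 0 (List.replicate (n + i) ())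
      = outp M i (M.run (· + ·) 0 (List.replicate n ())) := by
  unfold IncCRA.output outp IncCRA.run
  rw [List.replicate_add, List.foldl_append, foldl_replicate]

lemma lower_bound (k : ℕ) (hk : 0 < k)
    (H : ∀ w : List Unit, M.output (· + ·) 0 w = some ((w.length % k + 1) * w.length)) :
    k ≤ @Fintype.card M.X M.finX := by
  letI := M.finX
  set C := Cmax M with hC
  set n := k * (k + C + 1) with hn
  set cfg := M.run (· + ·) 0 (List.replicate n ()) with hcfg
  have hout : ∀ i : ℕ, outp M i cfg = some (((n + i) % k + 1) * (n + i)) := by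
    intro i
    rw [← output_eq_outp]
    have := H (List.replicate (n + i) ())
    simpa using this
  have hmod : ∀ i < k, (n + i) % k = i := by
    intro i hi
    rw [hn, Nat.mul_add_mod]
    exact Nat.mod_eq_of_lt hi
  have hreg : ∀ i < k, ∃ x : M.X, ∃ c ≤ k * C, cfg.2 x + c = (i + 1) * (n + i) := by
    intro i hi
    rcases structure_lemma M i cfg.1 with hnone | ⟨c, hc, hconst | ⟨x, hx⟩⟩
    · exfalso
      have := hnone cfg.2
      rw [Prod.mk.eta, hout i] at this
      exact Option.some_ne_none _ this
    · exfalso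
      rw [← hC] at hc
      have h1 := hconst cfg.2
      rw [Prod.mk.eta, hout i] at h1
      have h2 : ((n + i) % k + 1) * (n + i) = c := Option.some.inj h1
      have h3 : n + i ≤ ((n + i) % k + 1) * (n + i) := Nat.le_mul_of_pos_left _ (by omega)
      have h4 : (i + 1) * C ≤ k * C := Nat.mul_le_mul_right _ (by omega)
      have h5 : k * C < n := by
        have hexp : k * (k + C + 1) = k * k + k * C + k := by ring
        omega
      omega
    · rw [← hC] at hc
      have h1 := hx cfg.2
      rw [Prod.mk.eta, hout i] at h1
      have h2 : cfg.2 x + c = ((n + i) % k + 1) * (n + i) := (Option.some.inj h1).symm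
      rw [hmod i hi] at h2
      exact ⟨x, c, le_trans hc (Nat.mul_le_mul_right _ (by omega)), h2⟩
  have hchoose : ∀ i : Fin k, ∃ x : M.X, ∃ c ≤ k * C, cfg.2 x + c = (i.val + 1) * (n + i.val) :=
    fun i => hreg i.val i.isLt
  choose g c hc hval using hchoose
  have haux : ∀ i j : Fin k, i.val < j.val → g i ≠ g j := by
    intro i j hlt heq
    have e1 := hval i
    have e2 := hval j
    rw [heq] at e1
    have hc1 := hc i
    have hc2 := hc j
    have key : (j.val + 1) * (n + j.val) ≤ (i.val + 1) * (n + i.val) + k * C := by omega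
    have hjk : j.val < k := j.isLt
    have h1 : (i.val + 2) * n ≤ (j.val + 1) * (n + j.val) :=
      Nat.mul_le_mul (by omega) (by omega)
    have h2 : (i.val + 1) * (n + i.val) + k * C < (i.val + 2) * n := by
      have e3 : (i.val + 1) * (n + i.val) = (i.val + 1) * n + (i.val + 1) * i.val := by ring
      have h3 : (i.val + 1) * i.val ≤ k * k := Nat.mul_le_mul (by omega) (by omega)
      have h4 : (i.val + 2) * n = (i.val + 1) * n + n := by ring
      have h5 : k * k + k * C < n := by
        have hexp : k * (k + C + 1) = k * k + k * C + k := by ring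
        omega
      omega
    omega
  have hginj : Function.Injective g := by
    intro i j hij
    rcases lt_trichotomy i.val j.val with h | h | h
    · exact absurd hij (haux i j h)
    · exact Fin.ext h
    · exact absurd hij.symm (haux j i h)
  calc k = Fintype.card (Fin k) := (Fintype.card_fin k).symm
    _ ≤ Fintype.card M.X := Fintype.card_le_of_injective g hginj

end IncCRAAux


/-- For every `k ≥ 1`, the cost function over the unary alphabet defined by
`f_k(x) = ((x mod k) + 1)·x` (where `x` is the input length) is computable by a
CRA over `(ℕ, +c)` with exactly `k` registers, but not by any CRA over `(ℕ, +c)`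
with fewer than `k` registers. -/
theorem fk_needs_k_registers (k : ℕ) (hk : 0 < k) :
    (∃ M : IncCRA Unit ℕ, @Fintype.card M.X M.finX = k ∧
      ∀ w : List Unit, M.output (· + ·) 0 w = some ((w.length % k + 1) * w.length)) ∧
    (∀ M : IncCRA Unit ℕ,
      (∀ w : List Unit, M.output (· + ·) 0 w = some ((w.length % k + 1) * w.length)) →
      k ≤ @Fintype.card M.X M.finX) := by
  haveI : NeZero k := ⟨hk.ne'⟩
  constructor
  · refine ⟨IncCRAAux.Mk k, ?_, IncCRAAux.Mk_output k⟩
    show Fintype.card (ULift (ZMod k)) = k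
    rw [Fintype.card_ulift, ZMod.card]
  · intro M hM
    exact IncCRAAux.lower_bound M k hk hM
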